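/- Let X be a real-valued integrable random variable (the empirical risk estimator) with E[X²] < ∞, let R be a real constant (the true risk), and let b be a real constant (the flood level). Define the flooded estimator Y = |X - b| + b. Then E[(X - R)²] - E[(Y - R)²] = E[B], where B = 0 on the event {X ≥ b} and B = -4(b - X)(b - R) on the event {X < b}. -/

import Mathlib

open MeasureTheory

theorem flooding_mse_decomposition
    {Ω : Type*} [MeasurableSpace Ω] (μ : Measure Ω) [IsProbabilityMeasure μ]
    (X : Ω → ℝ) (hX : MemLp X 2 μ) (R b : ℝ) :
    (∫ ω, (X ω - R) ^ 2 ∂μ) - (∫ ω, ((|X ω - b| + b) - R) ^ 2 ∂μ) =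
      ∫ ω, (if b ≤ X ω then (0 : ℝ) else -4 * (b - X ω) * (b - R)) ∂μ := by
  have h1 : Integrable (fun ω => (X ω - R) ^ 2) μ := by
    have := (hX.sub (memLp_const R)).integrable_sq
    simpa [sq] using this
  have h2 : Integrable (fun ω => ((|X ω - b| + b) - R) ^ 2) μ := by
    have hY : MemLp (fun ω => |X ω - b| + b) 2 μ :=
      (hX.sub (memLp_const b)).abs.add (memLp_const b)
    have := (hY.sub (memLp_const R)).integrable_sq
    simpa [sq] using this
  rw [← integral_sub h1 h2]
  refine integral_congr_ae (Filter.Eventually.of_forall fun ω => ?_)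
  dsimp only
  by_cases h : b ≤ X ω
  · rw [if_pos h, abs_of_nonneg (by linarith)]
    ring
  · rw [if_neg h, abs_of_neg (by linarith)]
    ring
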